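/- Let p, q, r be positive integers. In the abelian group A = ℤ²/⟨(p,0),(0,q),(r,r)⟩, the image of the generator (1,0) has order gcd(p, lcm(q,r)). -/

import Mathlib

theorem stmt_8 (p q r : ℕ) (hp : 0 < p) (hq : 0 < q) (hr : 0 < r) :
    addOrderOf (QuotientAddGroup.mk ((1 : ℤ), (0 : ℤ)) :
        (ℤ × ℤ) ⧸ AddSubgroup.closure
          {((p : ℤ), (0 : ℤ)), ((0 : ℤ), (q : ℤ)), ((r : ℤ), (r : ℤ))}) =
      Nat.gcd p (Nat.lcm q r) := by
  set L : ℕ := Nat.lcm q r with hLdef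
  set d : ℕ := Nat.gcd p L with hddef
  have hL0 : 0 < L := Nat.pos_of_ne_zero (Nat.lcm_ne_zero hq.ne' hr.ne')
  have hd0 : 0 < d := Nat.gcd_pos_of_pos_right _ hL0
  set H : AddSubgroup (ℤ × ℤ) :=
    AddSubgroup.closure {((p : ℤ), (0 : ℤ)), ((0 : ℤ), (q : ℤ)), ((r : ℤ), (r : ℤ))} with hHdef
  -- The subgroup S containing H, used for the forward direction
  have key : ∀ n : ℤ, ((n, 0) : ℤ × ℤ) ∈ H ↔ (d : ℤ) ∣ n := by
    intro n
    constructor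
    · intro hn
      let S : AddSubgroup (ℤ × ℤ) :=
        { carrier := {xy | ∃ c : ℤ, (p : ℤ) ∣ (xy.1 - c * r) ∧ (q : ℤ) ∣ (xy.2 - c * r)}
          zero_mem' := ⟨0, by simp⟩
          add_mem' := by
            rintro ⟨x1, y1⟩ ⟨x2, y2⟩ ⟨c1, h1, h1'⟩ ⟨c2, h2, h2'⟩
            refine ⟨c1 + c2, ?_, ?_⟩
            · show (p : ℤ) ∣ x1 + x2 - (c1 + c2) * r
              convert dvd_add h1 h2 using 1; rfl; ring
            · show (q : ℤ) ∣ y1 + y2 - (c1 + c2) * r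
              convert dvd_add h1' h2' using 1; rfl; ring
          neg_mem' := by
            rintro ⟨x1, y1⟩ ⟨c1, h1, h1'⟩
            refine ⟨-c1, ?_, ?_⟩
            · show (p : ℤ) ∣ -x1 - (-c1) * r
              convert dvd_neg.mpr h1 using 1; rfl; ring
            · show (q : ℤ) ∣ -y1 - (-c1) * r
              convert dvd_neg.mpr h1' using 1; rfl; ring }
      have hHS : H ≤ S := by
        rw [hHdef]
        refine (AddSubgroup.closure_le _).mpr ?_
        intro x hx
        simp only [Set.mem_insert_iff, Set.mem_singleton_iff] at hx
        rcases hx with rfl | rfl | rfl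
        · exact ⟨0, by simp, by simp⟩
        · exact ⟨0, by simp, by simp⟩
        · exact ⟨1, by simp, by simp⟩
      obtain ⟨c, hc1, hc2⟩ := hHS hn
      simp only [zero_sub, dvd_neg] at hc2
      have hrdvd : (r : ℤ) ∣ c * r := ⟨c, mul_comm _ _⟩
      have hLdvd : (L : ℤ) ∣ c * r := by
        have := lcm_dvd hc2 hrdvd
        rw [← Int.coe_lcm] at this
        simpa [Int.lcm, Int.natAbs_natCast] using this
      have hdp : (d : ℤ) ∣ (p : ℤ) := Int.natCast_dvd_natCast.mpr (Nat.gcd_dvd_left _ _)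
      have hdL : (d : ℤ) ∣ (L : ℤ) := Int.natCast_dvd_natCast.mpr (Nat.gcd_dvd_right _ _)
      have : (d : ℤ) ∣ (n - c * r) + c * r :=
        dvd_add (hdp.trans hc1) (hdL.trans hLdvd)
      simpa using this
    · rintro ⟨k, rfl⟩
      have hpmem : (((p : ℤ), (0 : ℤ)) : ℤ × ℤ) ∈ H :=
        AddSubgroup.subset_closure (by simp)
      have hqmem : (((0 : ℤ), (q : ℤ)) : ℤ × ℤ) ∈ H :=
        AddSubgroup.subset_closure (by simp)
      have hrmem : (((r : ℤ), (r : ℤ)) : ℤ × ℤ) ∈ H :=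
        AddSubgroup.subset_closure (by simp)
      have hLL : (((L : ℤ), (L : ℤ)) : ℤ × ℤ) ∈ H := by
        have h1 : ((L / r : ℕ) : ℤ) • (((r : ℤ), (r : ℤ)) : ℤ × ℤ) ∈ H :=
          AddSubgroup.zsmul_mem _ hrmem _
        have h2 : ((L / r : ℕ) : ℤ) * (r : ℤ) = (L : ℤ) := by
          rw [← Nat.cast_mul, Nat.div_mul_cancel (Nat.dvd_lcm_right q r)]
        simpa only [Prod.smul_mk, smul_eq_mul, h2] using h1
      have h0L : (((0 : ℤ), (L : ℤ)) : ℤ × ℤ) ∈ H := by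
        have h1 : ((L / q : ℕ) : ℤ) • (((0 : ℤ), (q : ℤ)) : ℤ × ℤ) ∈ H :=
          AddSubgroup.zsmul_mem _ hqmem _
        have h2 : ((L / q : ℕ) : ℤ) * (q : ℤ) = (L : ℤ) := by
          rw [← Nat.cast_mul, Nat.div_mul_cancel (Nat.dvd_lcm_left q r)]
        simpa only [Prod.smul_mk, smul_eq_mul, h2, mul_zero] using h1
      have hL0mem : (((L : ℤ), (0 : ℤ)) : ℤ × ℤ) ∈ H := by
        have := AddSubgroup.sub_mem _ hLL h0L
        simpa using this
      have hd0mem : (((d : ℤ), (0 : ℤ)) : ℤ × ℤ) ∈ H := by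
        have hbezout : (d : ℤ) = (p : ℤ) * Int.gcdA p L + (L : ℤ) * Int.gcdB p L := by
          have := Int.gcd_eq_gcd_ab (p : ℤ) (L : ℤ)
          simpa [Int.gcd_natCast_natCast] using this
        have hmem : Int.gcdA p L • (((p : ℤ), (0 : ℤ)) : ℤ × ℤ) +
            Int.gcdB p L • (((L : ℤ), (0 : ℤ)) : ℤ × ℤ) ∈ H :=
          AddSubgroup.add_mem _ (AddSubgroup.zsmul_mem _ hpmem _)
            (AddSubgroup.zsmul_mem _ hL0mem _)
        have : Int.gcdA p L • (((p : ℤ), (0 : ℤ)) : ℤ × ℤ) +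
            Int.gcdB p L • (((L : ℤ), (0 : ℤ)) : ℤ × ℤ) = ((d : ℤ), (0 : ℤ)) := by
          simp only [Prod.smul_def, smul_eq_mul, Prod.mk_add_mk, mul_zero, add_zero]
          rw [hbezout]; ring_nf
        rwa [this] at hmem
      have := AddSubgroup.zsmul_mem _ hd0mem k
      simpa [Prod.smul_def, smul_eq_mul, mul_comm] using this
  have key2 : ∀ n : ℤ,
      n • (QuotientAddGroup.mk ((1 : ℤ), (0 : ℤ)) : (ℤ × ℤ) ⧸ H) = 0 ↔ (d : ℤ) ∣ n := by
    intro n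
    rw [← QuotientAddGroup.mk_zsmul, QuotientAddGroup.eq_zero_iff]
    have : n • (((1 : ℤ), (0 : ℤ)) : ℤ × ℤ) = ((n, 0) : ℤ × ℤ) := by
      simp [Prod.smul_def, smul_eq_mul]
    rw [this]
    exact key n
  set x : (ℤ × ℤ) ⧸ H := QuotientAddGroup.mk ((1 : ℤ), (0 : ℤ)) with hx
  refine Nat.dvd_antisymm ?_ ?_
  · apply addOrderOf_dvd_of_nsmul_eq_zero
    have := (key2 (d : ℤ)).mpr dvd_rfl
    rw [natCast_zsmul] at this
    exact this
  · have h0 : ((addOrderOf x : ℤ)) • x = 0 := by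
      rw [natCast_zsmul]
      exact addOrderOf_nsmul_eq_zero x
    have := (key2 (addOrderOf x : ℤ)).mp h0
    exact_mod_cast this
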